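/- Let α be a partial action of a topological group G on a topological space X, let X̃ = (G × X)/∼ with quotient map q, induced continuous action α̃ given by α̃_s(q(t,x)) = q(st,x), and ι : X → X̃, ι(x) = q(e,x). Then (ι, α̃) has the following universal property: for every continuous action δ of G on a topological space Z and every continuous map ψ : X → Z such that ψ(α_t(x)) = δ_t(ψ(x)) for all t ∈ G and x ∈ X_{t⁻¹}, there exists a unique continuous map ψ̃ : X̃ → Z satisfying ψ̃ ∘ ι = ψ and ψ̃(α̃_t(y)) = δ_t(ψ̃(y)) for all t ∈ G, y ∈ X̃; moreover ψ̃(q(t,x)) = δ_t(ψ(x)) for all t ∈ G, x ∈ X. -/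

import Mathlib

/-- A partial action of a topological group `G` on a topological space `X`. -/
structure TopPartialAction (G : Type*) (X : Type*) [Group G] [TopologicalSpace G]
    [IsTopologicalGroup G] [TopologicalSpace X] where
  dom : G → Set X
  act : G → X → X
  isOpen_dom : ∀ t, IsOpen (dom t)
  bijOn : ∀ t, Set.BijOn (act t) (dom t⁻¹) (dom t)
  isOpen_graph : IsOpen {p : G × X | p.2 ∈ dom p.1⁻¹}
  continuousOn : ContinuousOn (fun p : G × X => act p.1 p.2) {p : G × X | p.2 ∈ dom p.1⁻¹}
  dom_one : dom 1 = Set.univ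
  act_one : ∀ x, act 1 x = x
  act_comp : ∀ s t x, x ∈ dom t⁻¹ → act t x ∈ dom s⁻¹ →
    x ∈ dom (s * t)⁻¹ ∧ act (s * t) x = act s (act t x)

/-- The relation `(r, x) ∼ (s, y) ↔ x ∈ X_{r⁻¹ s} ∧ α_{s⁻¹ r}(x) = y` on `G × X`. -/
def TopPartialAction.rel {G X : Type*} [Group G] [TopologicalSpace G] [IsTopologicalGroup G]
    [TopologicalSpace X] (α : TopPartialAction G X) (p q : G × X) : Prop :=
  p.2 ∈ α.dom (p.1⁻¹ * q.1) ∧ α.act (q.1⁻¹ * p.1) p.2 = q.2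

/-- Universal property of the enveloping action: given a continuous global action `δ`
of `G` on `Z` and a continuous map `ψ : X → Z` satisfying `ψ (α_t x) = δ_t (ψ x)` for
`x ∈ X_{t⁻¹}`, there exists a unique continuous `Ψ : X̃ → Z` with `Ψ ∘ ι = ψ` which is
`G`-equivariant; moreover `Ψ (q (t, x)) = δ_t (ψ x)`. -/
theorem TopPartialAction.universal_property {G X Z : Type*} [Group G] [TopologicalSpace G]
    [IsTopologicalGroup G] [TopologicalSpace X] [TopologicalSpace Z]
    (α : TopPartialAction G X)
    (β : G → Quot α.rel → Quot α.rel)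
    (hβ : ∀ s t x, β s (Quot.mk α.rel (t, x)) = Quot.mk α.rel (s * t, x))
    (δ : G → Z → Z)
    (hδc : Continuous fun p : G × Z => δ p.1 p.2)
    (hδ1 : ∀ z, δ 1 z = z)
    (hδm : ∀ s t z, δ s (δ t z) = δ (s * t) z)
    (ψ : X → Z) (hψ : Continuous ψ)
    (hψe : ∀ t x, x ∈ α.dom t⁻¹ → ψ (α.act t x) = δ t (ψ x)) :
    ∃ Ψ : Quot α.rel → Z,
      (Continuous Ψ ∧ (∀ x, Ψ (Quot.mk α.rel (1, x)) = ψ x) ∧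
        (∀ t y, Ψ (β t y) = δ t (Ψ y)) ∧
        (∀ t x, Ψ (Quot.mk α.rel (t, x)) = δ t (ψ x))) ∧
      ∀ Ψ' : Quot α.rel → Z, Continuous Ψ' → (∀ x, Ψ' (Quot.mk α.rel (1, x)) = ψ x) →
        (∀ t y, Ψ' (β t y) = δ t (Ψ' y)) → Ψ' = Ψ := by
  have hwd : ∀ p q : G × X, α.rel p q → δ p.1 (ψ p.2) = δ q.1 (ψ q.2) := by
    rintro ⟨r, x⟩ ⟨s, y⟩ ⟨hdom, hact⟩
    have hx : x ∈ α.dom (s⁻¹ * r)⁻¹ := by simpa [mul_inv_rev] using hdom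
    have := hψe (s⁻¹ * r) x hx
    rw [hact] at this
    calc δ r (ψ x) = δ s (δ (s⁻¹ * r) (ψ x)) := by rw [hδm]; group
    _ = δ s (ψ y) := by rw [← this]
  refine ⟨Quot.lift (fun p : G × X => δ p.1 (ψ p.2)) hwd, ⟨?_, fun x => by simp [hδ1], ?_, fun t x => rfl⟩, ?_⟩
  · exact continuous_quot_lift _ (hδc.comp (continuous_fst.prodMk (hψ.comp continuous_snd)))
  · intro t y
    induction y using Quot.ind with
    | _ p =>
      obtain ⟨s, x⟩ := p
      rw [hβ]
      show δ (t * s) (ψ x) = δ t (δ s (ψ x))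
      rw [hδm]
  · intro Ψ' _ hΨ'1 hΨ'eq
    funext y
    induction y using Quot.ind with
    | _ p =>
      obtain ⟨t, x⟩ := p
      have : Quot.mk α.rel (t, x) = β t (Quot.mk α.rel (1, x)) := by rw [hβ, mul_one]
      rw [this, hΨ'eq, hΨ'1, hβ, mul_one]
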